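/- If X_1 ⊆ Σ_1^Z and X_2 ⊆ Σ_2^Z are minimal subshifts such that for all configurations c_1 ∈ X_1, c_2 ∈ X_2 and all words u_1 in the language of X_1 and u_2 in the language of X_2 of equal length, u_1 appears periodically in c_1 with some period q_1 and u_2 appears periodically in c_2 with some period q_2 with gcd(q_1,q_2)=1, then the product subshift X_1 ⊗ X_2 is minimal. -/

import Mathlib

/-- The word `w` occurs in the bi-infinite configuration `c` at position `i`. -/
def OccursAt {α : Type*} (w : List α) (c : ℤ → α) (i : ℤ) : Prop :=
  ∀ j : Fin w.length, c (i + (j : ℕ)) = w.get j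

/-- The word `w` appears (somewhere) in `c`. -/
def AppearsIn {α : Type*} (w : List α) (c : ℤ → α) : Prop :=
  ∃ i : ℤ, OccursAt w c i

/-- `w` is in the language of the set of configurations `X`. -/
def InLang {α : Type*} (X : Set (ℤ → α)) (w : List α) : Prop :=
  ∃ c ∈ X, AppearsIn w c

/-- `X` is minimal: every word of its language appears in every configuration of `X`. -/
def MinimalLang {α : Type*} (X : Set (ℤ → α)) : Prop :=
  ∀ w : List α, InLang X w → ∀ c ∈ X, AppearsIn w c

/-- The set of configurations avoiding every word of `Fw`. -/
def Avoiders {α : Type*} (Fw : Set (List α)) : Set (ℤ → α) :=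
  {c | ∀ w ∈ Fw, ¬ AppearsIn w c}

/-- `c` is periodic (its shift orbit is finite). -/
def PeriodicConf {α : Type*} (c : ℤ → α) : Prop :=
  ∃ p : ℤ, p ≠ 0 ∧ ∀ i : ℤ, c (i + p) = c i

/-- `X` is shift-invariant. -/
def ShiftInv {α : Type*} (X : Set (ℤ → α)) : Prop :=
  ∀ c ∈ X, (fun i => c (i + 1)) ∈ X ∧ (fun i => c (i - 1)) ∈ X

/-- `X` is a subshift: closed (for the product of discrete topologies) and
shift-invariant. -/
def IsSubshift {α : Type*} (X : Set (ℤ → α)) : Prop :=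
  @IsClosed _ (@Pi.topologicalSpace ℤ (fun _ => α) (fun _ => ⊥)) X ∧ ShiftInv X

/-- `w` occurs periodically in `c` with period `q`: there is a position `i` such that `w`
occurs at every position `i + j * q`, `j ∈ ℤ`. -/
def OccursPeriodically {α : Type*} (w : List α) (c : ℤ → α) (q : ℕ) : Prop :=
  ∃ i : ℤ, ∀ j : ℤ, OccursAt w c (i + j * (q : ℤ))

/-- The product of two sets of configurations. -/
def ProdShift {α β : Type*} (X : Set (ℤ → α)) (Y : Set (ℤ → β)) : Set (ℤ → α × β) :=
  {c | (fun i => (c i).1) ∈ X ∧ (fun i => (c i).2) ∈ Y}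

/-- If `X₁`, `X₂` are minimal subshifts such that equal-length words of their languages
occur periodically in every configuration with coprime periods, then the product
subshift `X₁ ⊗ X₂` is minimal. -/
theorem stmt12 {α β : Type} [Fintype α] [Fintype β]
    (X₁ : Set (ℤ → α)) (X₂ : Set (ℤ → β))
    (h₁ : IsSubshift X₁) (h₂ : IsSubshift X₂)
    (hmin₁ : MinimalLang X₁) (hmin₂ : MinimalLang X₂)
    (hper : ∀ c₁ ∈ X₁, ∀ c₂ ∈ X₂, ∀ (u₁ : List α) (u₂ : List β),
      InLang X₁ u₁ → InLang X₂ u₂ → u₁.length = u₂.length →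
        ∃ q₁ q₂ : ℕ, 0 < q₁ ∧ 0 < q₂ ∧ Nat.gcd q₁ q₂ = 1 ∧
          OccursPeriodically u₁ c₁ q₁ ∧ OccursPeriodically u₂ c₂ q₂) :
    MinimalLang (ProdShift X₁ X₂) := by
  intro w hw c hc
  obtain ⟨c', hc', i, hi⟩ := hw
  set u₁ := w.map Prod.fst with hu₁
  set u₂ := w.map Prod.snd with hu₂
  have hl₁ : u₁.length = w.length := List.length_map _
  have hl₂ : u₂.length = w.length := List.length_map _
  have hInLang₁ : InLang X₁ u₁ := by
    refine ⟨fun k => (c' k).1, hc'.1, i, fun j => ?_⟩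
    have hj : (j : ℕ) < w.length := hl₁ ▸ j.2
    have := hi ⟨j, hj⟩
    simpa [hu₁] using congrArg Prod.fst this
  have hInLang₂ : InLang X₂ u₂ := by
    refine ⟨fun k => (c' k).2, hc'.2, i, fun j => ?_⟩
    have hj : (j : ℕ) < w.length := hl₂ ▸ j.2
    have := hi ⟨j, hj⟩
    simpa [hu₂] using congrArg Prod.snd this
  obtain ⟨q₁, q₂, hq₁, hq₂, hgcd, ⟨i₁, ho₁⟩, ⟨i₂, ho₂⟩⟩ :=
    hper _ hc.1 _ hc.2 u₁ u₂ hInLang₁ hInLang₂ (hl₁.trans hl₂.symm)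
  have hcop : IsCoprime (q₁ : ℤ) (q₂ : ℤ) := by
    rw [Int.isCoprime_iff_gcd_eq_one, Int.gcd_natCast_natCast]
    exact hgcd
  obtain ⟨a, b, hab⟩ := hcop
  set d : ℤ := i₂ - i₁ with hd
  refine ⟨i₁ + (a * d) * (q₁ : ℤ), fun j => ?_⟩
  have hpeq : i₁ + (a * d) * (q₁ : ℤ) = i₂ + (-(b * d)) * (q₂ : ℤ) := by
    have : d * (a * q₁ + b * q₂) = d := by rw [hab]; ring
    linarith [this]
  have h1 := ho₁ (a * d) ⟨j, by rw [hl₁]; exact j.2⟩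
  have h2 := ho₂ (-(b * d)) ⟨j, by rw [hl₂]; exact j.2⟩
  rw [← hpeq] at h2
  refine Prod.ext ?_ ?_
  · simpa [hu₁] using h1
  · simpa [hu₂] using h2
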